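/- For every natural number n ≥ 7, λ₁(A_{Z₁}) < n − 2. -/

import Mathlib

open Matrix

/-- The largest eigenvalue of a real matrix (for symmetric matrices this is λ₁). -/
noncomputable def lam1 {n : ℕ} (A : Matrix (Fin n) (Fin n) ℝ) : ℝ :=
  sSup {μ : ℝ | ∃ v : Fin n → ℝ, v ≠ 0 ∧ A.mulVec v = μ • v}

/-- `A` is the adjacency matrix of a signed graph: symmetric, zero diagonal,
entries in {-1,0,1}. -/
def IsSignedAdj {n : ℕ} (A : Matrix (Fin n) (Fin n) ℝ) : Prop :=
  A.IsSymm ∧ (∀ i, A i i = 0) ∧ ∀ i j, A i j = -1 ∨ A i j = 0 ∨ A i j = 1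

/-- A signed graph is balanced if a global sign switching makes all edges positive. -/
def IsBalanced {n : ℕ} (A : Matrix (Fin n) (Fin n) ℝ) : Prop :=
  ∃ s : Fin n → ℝ, (∀ i, s i = -1 ∨ s i = 1) ∧ ∀ i j, 0 ≤ s i * A i j * s j

/-- Every fully present copy of K_{3,3} is balanced. -/
def K33Free {n : ℕ} (A : Matrix (Fin n) (Fin n) ℝ) : Prop :=
  ∀ a₁ a₂ a₃ b₁ b₂ b₃ : Fin n,
    [a₁, a₂, a₃, b₁, b₂, b₃].Nodup →
    (∀ a ∈ [a₁, a₂, a₃], ∀ b ∈ [b₁, b₂, b₃], A a b ≠ 0) →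
    ∀ a ∈ [a₁, a₂, a₃], ∀ a' ∈ [a₁, a₂, a₃], ∀ b ∈ [b₁, b₂, b₃], ∀ b' ∈ [b₁, b₂, b₃],
      A a b * A a b' * A a' b * A a' b' = 1

/-- Switching isomorphism of signed adjacency matrices. -/
def SwitchIso {n : ℕ} (A B : Matrix (Fin n) (Fin n) ℝ) : Prop :=
  ∃ σ : Equiv.Perm (Fin n), ∃ s : Fin n → ℝ, (∀ i, s i = -1 ∨ s i = 1) ∧
    ∀ i j, B i j = s i * s j * A (σ i) (σ j)

/-- Adjacency matrix of Γ_{n,t}: vertex 0 is u, vertices 1,…,n-1 form an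
all-positive K_{n-1}; u is adjacent to 1,…,t-1, with u1 the unique negative edge. -/
noncomputable def Mnt (n t : ℕ) : Matrix (Fin n) (Fin n) ℝ :=
  Matrix.of fun i j =>
    if i = j then 0
    else if (i : ℕ) = 0 then (if (j : ℕ) = 1 then -1 else if (j : ℕ) < t then 1 else 0)
    else if (j : ℕ) = 0 then (if (i : ℕ) = 1 then -1 else if (i : ℕ) < t then 1 else 0)
    else 1

/-- Adjacency matrix of the signed graph U (vertices v₁,…,vₙ are indices 0,…,n-1):
v₁v₂ negative; v₁,v₂ each positively joined to v₃,v₄,v₅; v₃,…,vₙ an all-positive K_{n-2}. -/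
noncomputable def AU (n : ℕ) : Matrix (Fin n) (Fin n) ℝ :=
  Matrix.of fun i j =>
    if i = j then 0
    else if ((i : ℕ) = 0 ∧ (j : ℕ) = 1) ∨ ((i : ℕ) = 1 ∧ (j : ℕ) = 0) then -1
    else if 2 ≤ (i : ℕ) ∧ 2 ≤ (j : ℕ) then 1
    else if ((i : ℕ) ≤ 1 ∧ 2 ≤ (j : ℕ) ∧ (j : ℕ) ≤ 4) ∨
            ((j : ℕ) ≤ 1 ∧ 2 ≤ (i : ℕ) ∧ (i : ℕ) ≤ 4) then 1
    else 0

/-- Adjacency matrix of Z₁: v₁v₂ negative; v₁ positive to v₃,v₄,v₅; v₂ positive to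
v₃,v₄,v₆; v₃,…,vₙ an all-positive K_{n-2} minus the edge v₅v₆. -/
noncomputable def AZ1 (n : ℕ) : Matrix (Fin n) (Fin n) ℝ :=
  Matrix.of fun i j =>
    if i = j then 0
    else if ((i : ℕ) = 0 ∧ (j : ℕ) = 1) ∨ ((i : ℕ) = 1 ∧ (j : ℕ) = 0) then -1
    else if 2 ≤ (i : ℕ) ∧ 2 ≤ (j : ℕ) then
      (if ((i : ℕ) = 4 ∧ (j : ℕ) = 5) ∨ ((i : ℕ) = 5 ∧ (j : ℕ) = 4) then 0 else 1)
    else if ((i : ℕ) = 0 ∧ ((j : ℕ) = 2 ∨ (j : ℕ) = 3 ∨ (j : ℕ) = 4)) ∨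
            ((j : ℕ) = 0 ∧ ((i : ℕ) = 2 ∨ (i : ℕ) = 3 ∨ (i : ℕ) = 4)) ∨
            ((i : ℕ) = 1 ∧ ((j : ℕ) = 2 ∨ (j : ℕ) = 3 ∨ (j : ℕ) = 5)) ∨
            ((j : ℕ) = 1 ∧ ((i : ℕ) = 2 ∨ (i : ℕ) = 3 ∨ (i : ℕ) = 5)) then 1
    else 0

/-- Adjacency matrix of Z₂: v₁v₂ negative; v₁ positive to v₃,v₄,v₅; v₂ positive to
v₃,v₄,v₆; v₃,…,vₙ an all-positive K_{n-2} minus the edges v₄v₅ and v₄v₆. -/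
noncomputable def AZ2 (n : ℕ) : Matrix (Fin n) (Fin n) ℝ :=
  Matrix.of fun i j =>
    if i = j then 0
    else if ((i : ℕ) = 0 ∧ (j : ℕ) = 1) ∨ ((i : ℕ) = 1 ∧ (j : ℕ) = 0) then -1
    else if 2 ≤ (i : ℕ) ∧ 2 ≤ (j : ℕ) then
      (if ((i : ℕ) = 3 ∧ ((j : ℕ) = 4 ∨ (j : ℕ) = 5)) ∨
          ((j : ℕ) = 3 ∧ ((i : ℕ) = 4 ∨ (i : ℕ) = 5)) then 0 else 1)
    else if ((i : ℕ) = 0 ∧ ((j : ℕ) = 2 ∨ (j : ℕ) = 3 ∨ (j : ℕ) = 4)) ∨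
            ((j : ℕ) = 0 ∧ ((i : ℕ) = 2 ∨ (i : ℕ) = 3 ∨ (i : ℕ) = 4)) ∨
            ((i : ℕ) = 1 ∧ ((j : ℕ) = 2 ∨ (j : ℕ) = 3 ∨ (j : ℕ) = 5)) ∨
            ((j : ℕ) = 1 ∧ ((i : ℕ) = 2 ∨ (i : ℕ) = 3 ∨ (i : ℕ) = 5)) then 1
    else 0

/-- Adjacency matrix of W: v₁v₂ negative; v₁,v₃,v₅,v₆,…,vₙ an all-positive K_{n-2};
v₂ positive to v₃,v₄; v₄ positive to v₁,v₃,v₅. -/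
noncomputable def AW (n : ℕ) : Matrix (Fin n) (Fin n) ℝ :=
  Matrix.of fun i j =>
    if i = j then 0
    else if ((i : ℕ) = 0 ∧ (j : ℕ) = 1) ∨ ((i : ℕ) = 1 ∧ (j : ℕ) = 0) then -1
    else if (i : ℕ) ≠ 1 ∧ (i : ℕ) ≠ 3 ∧ (j : ℕ) ≠ 1 ∧ (j : ℕ) ≠ 3 then 1
    else if ((i : ℕ) = 1 ∧ ((j : ℕ) = 2 ∨ (j : ℕ) = 3)) ∨
            ((j : ℕ) = 1 ∧ ((i : ℕ) = 2 ∨ (i : ℕ) = 3)) ∨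
            ((i : ℕ) = 3 ∧ ((j : ℕ) = 0 ∨ (j : ℕ) = 2 ∨ (j : ℕ) = 4)) ∨
            ((j : ℕ) = 3 ∧ ((i : ℕ) = 0 ∨ (i : ℕ) = 2 ∨ (i : ℕ) = 4)) then 1
    else 0

private lemma sum_ite_val {n : ℕ} (f : Fin n → ℝ) (m : ℕ) (hm : m < n) :
    ∑ j : Fin n, (if (j : ℕ) = m then f j else 0) = f ⟨m, hm⟩ := by
  rw [Finset.sum_eq_single (⟨m, hm⟩ : Fin n)]
  · simp
  · intro b _ hb
    rw [if_neg]
    intro h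
    exact hb (Fin.ext h)
  · intro h
    exact absurd (Finset.mem_univ _) h

private lemma sum_ite_val_neg {n : ℕ} (f : Fin n → ℝ) (m : ℕ) (hm : m < n) :
    ∑ j : Fin n, (if (j : ℕ) = m then -f j else 0) = -f ⟨m, hm⟩ :=
  sum_ite_val (fun j => -f j) m hm

private lemma sum_ite_val_const {n : ℕ} (c : ℝ) (m : ℕ) (hm : m < n) :
    ∑ j : Fin n, (if (j : ℕ) = m then c else 0) = c :=
  sum_ite_val (fun _ => c) m hm

set_option maxHeartbeats 1600000 in
private lemma AZ1_eig_lt {n : ℕ} (hn : 7 ≤ n) {μ : ℝ} {v : Fin n → ℝ} (hv0 : v ≠ 0)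
    (hv : (AZ1 n).mulVec v = μ • v) : μ < (n : ℝ) - 2 := by
  by_contra hcon
  push_neg at hcon
  have hn7 : (7 : ℝ) ≤ (n : ℝ) := by exact_mod_cast hn
  have hμ5 : (5 : ℝ) ≤ μ := by linarith
  have h0n : 0 < n := by omega
  have h1n : 1 < n := by omega
  have h2n : 2 < n := by omega
  have h3n : 3 < n := by omega
  have h4n : 4 < n := by omega
  have h5n : 5 < n := by omega
  set i0 : Fin n := ⟨0, h0n⟩ with hi0
  set i1 : Fin n := ⟨1, h1n⟩ with hi1
  set i2 : Fin n := ⟨2, h2n⟩ with hi2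
  set i3 : Fin n := ⟨3, h3n⟩ with hi3
  set i4 : Fin n := ⟨4, h4n⟩ with hi4
  set i5 : Fin n := ⟨5, h5n⟩ with hi5
  have hrow : ∀ i : Fin n, ∑ j, AZ1 n i j * v j = μ * v i := by
    intro i
    have := congrFun hv i
    simpa [Matrix.mulVec, dotProduct] using this
  -- row 0
  have E0 : μ * v i0 = -v i1 + (v i2 + (v i3 + v i4)) := by
    have hp : ∀ j : Fin n, AZ1 n i0 j * v j =
        (if (j:ℕ) = 1 then -v j else 0) + ((if (j:ℕ) = 2 then v j else 0) +
        ((if (j:ℕ) = 3 then v j else 0) + (if (j:ℕ) = 4 then v j else 0))) := by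
      intro j
      norm_num [AZ1, Matrix.of_apply, Fin.ext_iff, hi0]
      split_ifs <;> first | ring1 | (exfalso; omega)
    rw [← hrow i0, Finset.sum_congr rfl fun j _ => hp j]
    simp only [Finset.sum_add_distrib, sum_ite_val_neg v 1 h1n,
      sum_ite_val v 2 h2n, sum_ite_val v 3 h3n, sum_ite_val v 4 h4n]
    rfl
  -- row 1
  have E1 : μ * v i1 = -v i0 + (v i2 + (v i3 + v i5)) := by
    have hp : ∀ j : Fin n, AZ1 n i1 j * v j =
        (if (j:ℕ) = 0 then -v j else 0) + ((if (j:ℕ) = 2 then v j else 0) +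
        ((if (j:ℕ) = 3 then v j else 0) + (if (j:ℕ) = 5 then v j else 0))) := by
      intro j
      norm_num [AZ1, Matrix.of_apply, Fin.ext_iff, hi1]
      split_ifs <;> first | ring1 | (exfalso; omega)
    rw [← hrow i1, Finset.sum_congr rfl fun j _ => hp j]
    simp only [Finset.sum_add_distrib, sum_ite_val_neg v 0 h0n,
      sum_ite_val v 2 h2n, sum_ite_val v 3 h3n, sum_ite_val v 5 h5n]
    rfl
  -- row 2
  have E2 : μ * v i2 = v i0 + (v i1 + ((∑ j : Fin n, if 2 ≤ (j:ℕ) then v j else 0) + -v i2)) := by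
    have hp : ∀ j : Fin n, AZ1 n i2 j * v j =
        (if (j:ℕ) = 0 then v j else 0) + ((if (j:ℕ) = 1 then v j else 0) +
        ((if 2 ≤ (j:ℕ) then v j else 0) + (if (j:ℕ) = 2 then -v j else 0))) := by
      intro j
      norm_num [AZ1, Matrix.of_apply, Fin.ext_iff, hi2]
      split_ifs <;> first | ring1 | (exfalso; omega)
    rw [← hrow i2, Finset.sum_congr rfl fun j _ => hp j]
    simp only [Finset.sum_add_distrib, sum_ite_val v 0 h0n,
      sum_ite_val v 1 h1n, sum_ite_val_neg v 2 h2n]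
    rfl
  -- row 3
  have E3 : μ * v i3 = v i0 + (v i1 + ((∑ j : Fin n, if 2 ≤ (j:ℕ) then v j else 0) + -v i3)) := by
    have hp : ∀ j : Fin n, AZ1 n i3 j * v j =
        (if (j:ℕ) = 0 then v j else 0) + ((if (j:ℕ) = 1 then v j else 0) +
        ((if 2 ≤ (j:ℕ) then v j else 0) + (if (j:ℕ) = 3 then -v j else 0))) := by
      intro j
      norm_num [AZ1, Matrix.of_apply, Fin.ext_iff, hi3]
      split_ifs <;> first | ring1 | (exfalso; omega)
    rw [← hrow i3, Finset.sum_congr rfl fun j _ => hp j]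
    simp only [Finset.sum_add_distrib, sum_ite_val v 0 h0n,
      sum_ite_val v 1 h1n, sum_ite_val_neg v 3 h3n]
    rfl
  -- row 4
  have E4 : μ * v i4 = v i0 + ((∑ j : Fin n, if 2 ≤ (j:ℕ) then v j else 0) + (-v i4 + -v i5)) := by
    have hp : ∀ j : Fin n, AZ1 n i4 j * v j =
        (if (j:ℕ) = 0 then v j else 0) + ((if 2 ≤ (j:ℕ) then v j else 0) +
        ((if (j:ℕ) = 4 then -v j else 0) + (if (j:ℕ) = 5 then -v j else 0))) := by
      intro j
      norm_num [AZ1, Matrix.of_apply, Fin.ext_iff, hi4]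
      split_ifs <;> first | ring1 | (exfalso; omega)
    rw [← hrow i4, Finset.sum_congr rfl fun j _ => hp j]
    simp only [Finset.sum_add_distrib, sum_ite_val v 0 h0n,
      sum_ite_val_neg v 4 h4n, sum_ite_val_neg v 5 h5n]
    rfl
  -- row 5
  have E5 : μ * v i5 = v i1 + ((∑ j : Fin n, if 2 ≤ (j:ℕ) then v j else 0) + (-v i4 + -v i5)) := by
    have hp : ∀ j : Fin n, AZ1 n i5 j * v j =
        (if (j:ℕ) = 1 then v j else 0) + ((if 2 ≤ (j:ℕ) then v j else 0) +
        ((if (j:ℕ) = 4 then -v j else 0) + (if (j:ℕ) = 5 then -v j else 0))) := by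
      intro j
      norm_num [AZ1, Matrix.of_apply, Fin.ext_iff, hi5]
      split_ifs <;> first | ring1 | (exfalso; omega)
    rw [← hrow i5, Finset.sum_congr rfl fun j _ => hp j]
    simp only [Finset.sum_add_distrib, sum_ite_val v 1 h1n,
      sum_ite_val_neg v 4 h4n, sum_ite_val_neg v 5 h5n]
    rfl
  -- rows k ≥ 6
  have Ek : ∀ k : Fin n, 6 ≤ (k : ℕ) →
      μ * v k = (∑ j : Fin n, if 2 ≤ (j:ℕ) then v j else 0) + -v k := by
    intro k hk
    have hp : ∀ j : Fin n, AZ1 n k j * v j =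
        (if 2 ≤ (j:ℕ) then v j else 0) + (if (j:ℕ) = (k:ℕ) then -v j else 0) := by
      intro j
      norm_num [AZ1, Matrix.of_apply, Fin.ext_iff]
      split_ifs <;> first | ring1 | (exfalso; omega)
    rw [← hrow k, Finset.sum_congr rfl fun j _ => hp j]
    simp only [Finset.sum_add_distrib, sum_ite_val_neg v (k : ℕ) k.isLt, Fin.eta]
  -- S decomposition
  have hST : (∑ j : Fin n, if 2 ≤ (j:ℕ) then v j else 0) =
      v i2 + (v i3 + (v i4 + (v i5 + (∑ j : Fin n, if 6 ≤ (j:ℕ) then v j else 0)))) := by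
    have hp : ∀ j : Fin n, (if 2 ≤ (j:ℕ) then v j else 0) =
        (if (j:ℕ) = 2 then v j else 0) + ((if (j:ℕ) = 3 then v j else 0) +
        ((if (j:ℕ) = 4 then v j else 0) + ((if (j:ℕ) = 5 then v j else 0) +
        (if 6 ≤ (j:ℕ) then v j else 0)))) := by
      intro j
      split_ifs <;> first | ring1 | (exfalso; omega)
    rw [Finset.sum_congr rfl fun j _ => hp j]
    simp only [Finset.sum_add_distrib, sum_ite_val v 2 h2n,
      sum_ite_val v 3 h3n, sum_ite_val v 4 h4n, sum_ite_val v 5 h5n]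
    rfl
  -- counting
  have hC : (∑ j : Fin n, if 6 ≤ (j:ℕ) then (1:ℝ) else 0) = (n : ℝ) - 6 := by
    have hp : ∀ j : Fin n, (if 6 ≤ (j:ℕ) then (1:ℝ) else 0) =
        1 + ((if (j:ℕ) = 0 then (-1:ℝ) else 0) + ((if (j:ℕ) = 1 then (-1:ℝ) else 0) +
        ((if (j:ℕ) = 2 then (-1:ℝ) else 0) + ((if (j:ℕ) = 3 then (-1:ℝ) else 0) +
        ((if (j:ℕ) = 4 then (-1:ℝ) else 0) + (if (j:ℕ) = 5 then (-1:ℝ) else 0)))))) := by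
      intro j
      have := j.isLt
      split_ifs <;> first | (exfalso; omega) | norm_num
    rw [Finset.sum_congr rfl fun j _ => hp j]
    simp only [Finset.sum_add_distrib, sum_ite_val_const (-1:ℝ) 0 h0n,
      sum_ite_val_const (-1:ℝ) 1 h1n, sum_ite_val_const (-1:ℝ) 2 h2n,
      sum_ite_val_const (-1:ℝ) 3 h3n, sum_ite_val_const (-1:ℝ) 4 h4n,
      sum_ite_val_const (-1:ℝ) 5 h5n, Finset.sum_const, Finset.card_univ,
      Fintype.card_fin, nsmul_eq_mul, mul_one]
    try ring
  -- the T-equation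
  have hT : (μ + 1) * (∑ j : Fin n, if 6 ≤ (j:ℕ) then v j else 0) =
      ((n : ℝ) - 6) * (∑ j : Fin n, if 2 ≤ (j:ℕ) then v j else 0) := by
    rw [Finset.mul_sum]
    have hp : ∀ j : Fin n, (μ + 1) * (if 6 ≤ (j:ℕ) then v j else 0) =
        (∑ j' : Fin n, if 2 ≤ (j':ℕ) then v j' else 0) * (if 6 ≤ (j:ℕ) then (1:ℝ) else 0) := by
      intro j
      by_cases h : 6 ≤ (j:ℕ)
      · rw [if_pos h, if_pos h, mul_one]
        have := Ek j h
        linarith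
      · rw [if_neg h, if_neg h, mul_zero, mul_zero]
    rw [Finset.sum_congr rfl fun j _ => hp j, ← Finset.mul_sum, hC]
    ring
  clear hrow hv
  -- symmetric coordinates
  have h23 : v i2 = v i3 := by
    have h : (μ + 1) * (v i2 - v i3) = 0 := by linear_combination E2 - E3
    rcases mul_eq_zero.mp h with h' | h'
    · exfalso; linarith
    · linarith
  have h01 : v i0 = v i1 := by
    have h : (μ ^ 2 - μ - 1) * (v i0 - v i1) = 0 := by
      linear_combination μ * E0 - μ * E1 + E4 - E5
    rcases mul_eq_zero.mp h with h' | h'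
    · exfalso; nlinarith
    · linarith
  have h45 : v i4 = v i5 := by
    have h : μ * (v i4 - v i5) = 0 := by linear_combination E4 - E5 + h01
    rcases mul_eq_zero.mp h with h' | h'
    · exfalso; linarith
    · linarith
  have hv1 : v i1 = v i0 := h01.symm
  have hv3 : v i3 = v i2 := h23.symm
  have hv5 : v i5 = v i4 := h45.symm
  rw [hv1, hv3] at E0
  rw [hv1] at E2
  rw [hv5] at E4
  rw [hv3, hv5] at hST
  -- scalar relations
  have hI : 2 * v i2 + v i4 = (μ + 1) * v i0 := by linear_combination -E0
  have hSv : (∑ j : Fin n, if 2 ≤ (j:ℕ) then v j else 0) = (μ + 1) * v i2 - 2 * v i0 := by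
    linear_combination -E2
  have hII : (μ + 2) * v i4 = (μ + 1) * v i2 - v i0 := by linear_combination E4 + hSv
  have hb : (3 * μ + 5) * v i2 = (μ ^ 2 + 3 * μ + 3) * v i0 := by
    linear_combination (μ + 2) * hI - hII
  have hc : (3 * μ + 5) * v i4 = (μ ^ 2 + 2 * μ - 1) * v i0 := by
    linear_combination (3 * μ + 5) * hI - 2 * hb
  have hIII : (μ + 7 - (n : ℝ)) * (∑ j : Fin n, if 2 ≤ (j:ℕ) then v j else 0) =
      2 * (μ + 1) * (v i2 + v i4) := by
    linear_combination hT + (μ + 1) * hST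
  have hS2 : (μ + 7 - (n : ℝ)) * ((μ + 1) * v i2 - 2 * v i0) = 2 * (μ + 1) * (v i2 + v i4) := by
    linear_combination hIII - (μ + 7 - (n : ℝ)) * hSv
  have hKey : (μ + 7 - (n : ℝ)) * (μ ^ 3 + 4 * μ ^ 2 - 7) * v i0 =
      (4 * μ ^ 3 + 14 * μ ^ 2 + 14 * μ + 4) * v i0 := by
    linear_combination (3 * μ + 5) * hS2 + (2 * (μ + 1) - (μ + 7 - (n : ℝ)) * (μ + 1)) * hb +
      2 * (μ + 1) * hc
  -- v i0 ≠ 0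
  have ha : v i0 ≠ 0 := by
    intro ha0
    have h3μ : (0 : ℝ) < 3 * μ + 5 := by linarith
    have hb0 : v i2 = 0 := by
      have h : (3 * μ + 5) * v i2 = 0 := by rw [hb, ha0, mul_zero]
      rcases mul_eq_zero.mp h with h' | h'
      · exfalso; linarith
      · exact h'
    have hc0 : v i4 = 0 := by
      have h : (3 * μ + 5) * v i4 = 0 := by rw [hc, ha0, mul_zero]
      rcases mul_eq_zero.mp h with h' | h'
      · exfalso; linarith
      · exact h'
    have hS0 : (∑ j : Fin n, if 2 ≤ (j:ℕ) then v j else 0) = 0 := by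
      rw [hSv, hb0, ha0]; ring
    apply hv0
    funext j
    show v j = 0
    by_cases h6 : 6 ≤ (j : ℕ)
    · have h := Ek j h6
      rw [hS0] at h
      have h' : (μ + 1) * v j = 0 := by linarith
      rcases mul_eq_zero.mp h' with h'' | h''
      · exfalso; linarith
      · exact h''
    · have hj : (j:ℕ) = 0 ∨ (j:ℕ) = 1 ∨ (j:ℕ) = 2 ∨ (j:ℕ) = 3 ∨ (j:ℕ) = 4 ∨ (j:ℕ) = 5 := by
        omega
      rcases hj with h | h | h | h | h | h
      · rw [show j = i0 from Fin.ext h]; exact ha0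
      · rw [show j = i1 from Fin.ext h, hv1]; exact ha0
      · rw [show j = i2 from Fin.ext h]; exact hb0
      · rw [show j = i3 from Fin.ext h, hv3]; exact hb0
      · rw [show j = i4 from Fin.ext h]; exact hc0
      · rw [show j = i5 from Fin.ext h, hv5]; exact hc0
  have hmain : (μ + 7 - (n : ℝ)) * (μ ^ 3 + 4 * μ ^ 2 - 7) =
      4 * μ ^ 3 + 14 * μ ^ 2 + 14 * μ + 4 := mul_right_cancel₀ ha hKey
  have hm5 : (5 : ℝ) ≤ μ + 7 - (n : ℝ) := by linarith
  have hP : (0 : ℝ) < μ ^ 3 + 4 * μ ^ 2 - 7 := by nlinarith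
  have h1 : 5 * (μ ^ 3 + 4 * μ ^ 2 - 7) ≤ (μ + 7 - (n : ℝ)) * (μ ^ 3 + 4 * μ ^ 2 - 7) := by
    nlinarith
  nlinarith [mul_nonneg (by linarith : (0:ℝ) ≤ μ - 5) (by nlinarith : (0:ℝ) ≤ μ ^ 2),
    mul_nonneg (by linarith : (0:ℝ) ≤ μ - 5) (by linarith : (0:ℝ) ≤ μ)]

theorem lam1_AZ1_lt (n : ℕ) (hn : 7 ≤ n) : lam1 (AZ1 n) < (n : ℝ) - 2 := by
  have hn7 : (7 : ℝ) ≤ (n : ℝ) := by exact_mod_cast hn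
  rw [lam1]
  rcases Set.eq_empty_or_nonempty
      {μ : ℝ | ∃ v : Fin n → ℝ, v ≠ 0 ∧ (AZ1 n).mulVec v = μ • v} with h | h
  · rw [h, Real.sSup_empty]; linarith
  · have hfin : {μ : ℝ | ∃ v : Fin n → ℝ, v ≠ 0 ∧ (AZ1 n).mulVec v = μ • v}.Finite := by
      apply Set.Finite.subset
        (Polynomial.finite_setOf_isRoot ((AZ1 n).charpoly_monic.ne_zero))
      rintro μ ⟨v, hv0, hv⟩
      have h1 : (μ • (1 : Matrix (Fin n) (Fin n) ℝ) - AZ1 n).mulVec v = 0 := by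
        rw [Matrix.sub_mulVec, Matrix.smul_mulVec, Matrix.one_mulVec, hv, sub_self]
      have hdet : (μ • (1 : Matrix (Fin n) (Fin n) ℝ) - AZ1 n).det = 0 :=
        Matrix.exists_mulVec_eq_zero_iff.mp ⟨v, hv0, h1⟩
      have hmap : (Matrix.charmatrix (AZ1 n)).map (Polynomial.evalRingHom μ) =
          μ • (1 : Matrix (Fin n) (Fin n) ℝ) - AZ1 n := by
        ext i j
        by_cases hij : i = j
        · subst hij
          simp [Matrix.charmatrix_apply_eq, Matrix.one_apply]
        · simp [Matrix.charmatrix_apply_ne _ _ _ hij, Matrix.one_apply_ne hij]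
      show (AZ1 n).charpoly.IsRoot μ
      have : Polynomial.eval μ (AZ1 n).charpoly =
          ((Matrix.charmatrix (AZ1 n)).map (Polynomial.evalRingHom μ)).det := by
        rw [Matrix.charpoly, show Polynomial.eval μ ((AZ1 n).charmatrix.det)
            = (Polynomial.evalRingHom μ) ((AZ1 n).charmatrix.det) from rfl,
          RingHom.map_det, RingHom.mapMatrix_apply]
      rw [Polynomial.IsRoot, this, hmap, hdet]
    have hmem := h.csSup_mem hfin
    obtain ⟨v, hv0, hv⟩ := hmem
    exact AZ1_eig_lt hn hv0 hv
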